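/- Let n, m, k ∈ ℕ with k < n and m·k ≤ n be such that b := 2n/k is a natural number, k is even, and b ≤ k/2. Then there exists an (n,m,k)-assignment mechanism that is impartial and (1/(2b))-optimal. -/

import Mathlib

open Finset

/-- A valid weight matrix: nonnegative entries and zero diagonal. -/
def IsValidMatrix {n : ℕ} (A : Matrix (Fin n) (Fin n) ℝ) : Prop :=
  (∀ i j, 0 ≤ A i j) ∧ ∀ i, A i i = 0

/-- Score of a subset `S` of agents under weight matrix `A`. -/
def score {n : ℕ} (A : Matrix (Fin n) (Fin n) ℝ) (S : Finset (Fin n)) : ℝ :=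
  ∑ i : Fin n, ∑ j ∈ S, A i j

/-- A feasible assignment: `m` pairwise disjoint sets of agents, each of
cardinality at most `k`. -/
def FeasibleAssignment {n : ℕ} (m k : ℕ) (X : Fin m → Finset (Fin n)) : Prop :=
  (∀ ℓ, (X ℓ).card ≤ k) ∧ ∀ ℓ ℓ', ℓ ≠ ℓ' → Disjoint (X ℓ) (X ℓ')

/-- Total score of an assignment: the sum over the jobs of the score of the set
assigned to each job. -/
def totalScore {n m : ℕ} (A : Fin m → Matrix (Fin n) (Fin n) ℝ)
    (X : Fin m → Finset (Fin n)) : ℝ :=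
  ∑ ℓ, score (A ℓ) (X ℓ)

/-- The maximum total score over all feasible assignments with capacity `k`. -/
noncomputable def optAssign {n : ℕ} (m k : ℕ)
    (A : Fin m → Matrix (Fin n) (Fin n) ℝ) : ℝ :=
  sSup {x : ℝ | ∃ X : Fin m → Finset (Fin n),
    FeasibleAssignment m k X ∧ totalScore A X = x}

/-- Impartiality of an `(n,m,k)`-assignment mechanism. -/
def ImpartialAssign {n m : ℕ}
    (f : (Fin m → Matrix (Fin n) (Fin n) ℝ) → (Fin m → Finset (Fin n))) : Prop :=
  ∀ A A' : Fin m → Matrix (Fin n) (Fin n) ℝ,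
    (∀ ℓ, IsValidMatrix (A ℓ)) → (∀ ℓ, IsValidMatrix (A' ℓ)) →
    ∀ i : Fin n, (∀ ℓ, ∀ i', i' ≠ i → A ℓ i' = A' ℓ i') →
      ∀ ℓ, (i ∈ f A ℓ ↔ i ∈ f A' ℓ)

/-- `α`-optimality of an `(n,m,k)`-assignment mechanism. -/
def AlphaOptimalAssign {n m : ℕ} (k : ℕ)
    (f : (Fin m → Matrix (Fin n) (Fin n) ℝ) → (Fin m → Finset (Fin n)))
    (α : ℝ) : Prop :=
  ∀ A : Fin m → Matrix (Fin n) (Fin n) ℝ, (∀ ℓ, IsValidMatrix (A ℓ)) →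
    α * optAssign m k A ≤ totalScore A (f A)

namespace Stmt15Aux

attribute [local instance] Classical.propDecidable

variable {n : ℕ}

def rIdx (b : ℕ) (i : Fin n) : ℕ := i.val / b

def dIdx (b k2 : ℕ) (i : Fin n) : ℕ := (i.val / b + i.val % b) % k2

lemma rIdx_lt {b k2 : ℕ} (hb : 0 < b) (hn : n = k2 * b) (i : Fin n) :
    rIdx b i < k2 := (Nat.div_lt_iff_lt_mul hb).2 (hn ▸ i.isLt)

lemma dIdx_lt {b k2 : ℕ} (hk2 : 0 < k2) (i : Fin n) : dIdx b k2 i < k2 :=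
  Nat.mod_lt _ hk2

lemma eq_of_rIdx_dIdx {b k2 : ℕ} (hb : 0 < b) (hbk2 : b ≤ k2) {i j : Fin n}
    (h1 : rIdx b i = rIdx b j) (h2 : dIdx b k2 i = dIdx b k2 j) : i = j := by
  have h3 : (i.val / b + i.val % b) % k2 = (j.val / b + j.val % b) % k2 := h2
  rw [show i.val / b = j.val / b from h1] at h3
  have h5 : i.val % b ≡ j.val % b [MOD k2] := Nat.ModEq.add_left_cancel' _ h3
  have hi : i.val % b < k2 := lt_of_lt_of_le (Nat.mod_lt _ hb) hbk2
  have hj : j.val % b < k2 := lt_of_lt_of_le (Nat.mod_lt _ hb) hbk2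
  have hmod : i.val % b = j.val % b := by
    have := h5
    unfold Nat.ModEq at this
    rwa [Nat.mod_eq_of_lt hi, Nat.mod_eq_of_lt hj] at this
  have di := Nat.div_add_mod i.val b
  have dj := Nat.div_add_mod j.val b
  have h1' : i.val / b = j.val / b := h1
  rw [h1'] at di
  apply Fin.ext
  omega

lemma eq_of_dIdx_mod {b k2 : ℕ} (hb : 0 < b) (hn : n = k2 * b) {i j : Fin n}
    (h2 : dIdx b k2 i = dIdx b k2 j) (h3 : i.val % b = j.val % b) : i = j := by
  have hi : rIdx b i < k2 := rIdx_lt hb hn i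
  have hj : rIdx b j < k2 := rIdx_lt hb hn j
  have h4 : (i.val / b + i.val % b) % k2 = (j.val / b + i.val % b) % k2 := by
    conv_rhs => rw [h3]
    exact h2
  have h5 : i.val / b ≡ j.val / b [MOD k2] := Nat.ModEq.add_right_cancel' _ h4
  have hdiv : i.val / b = j.val / b := by
    unfold Nat.ModEq at h5
    unfold rIdx at hi hj
    rwa [Nat.mod_eq_of_lt hi, Nat.mod_eq_of_lt hj] at h5
  have di := Nat.div_add_mod i.val b
  have dj := Nat.div_add_mod j.val b
  rw [hdiv] at di
  rw [h3] at di
  apply Fin.ext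
  omega

lemma eq_of_div_mod {b : ℕ} {i j : Fin n} (h1 : rIdx b i = rIdx b j)
    (h2 : i.val % b = j.val % b) : i = j := by
  have di := Nat.div_add_mod i.val b
  have dj := Nat.div_add_mod j.val b
  have h1' : i.val / b = j.val / b := h1
  rw [h1', h2] at di
  exact Fin.ext (by omega)

noncomputable def csum (A : Matrix (Fin n) (Fin n) ℝ) (j : Fin n) : ℝ := ∑ i, A i j

noncomputable def uu (b : ℕ) (A : Matrix (Fin n) (Fin n) ℝ) (j : Fin n) : ℝ :=
  ∑ i ∈ univ.filter (fun i => rIdx b i ≠ rIdx b j), A i j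

noncomputable def vv (b : ℕ) (A : Matrix (Fin n) (Fin n) ℝ) (j : Fin n) : ℝ :=
  ∑ i ∈ univ.filter (fun i => rIdx b i = rIdx b j ∧ i ≠ j), A i j

lemma uu_nonneg (b : ℕ) {A : Matrix (Fin n) (Fin n) ℝ} (hA : IsValidMatrix A) (j : Fin n) :
    0 ≤ uu b A j := Finset.sum_nonneg fun i _ => hA.1 i j

lemma vv_nonneg (b : ℕ) {A : Matrix (Fin n) (Fin n) ℝ} (hA : IsValidMatrix A) (j : Fin n) :
    0 ≤ vv b A j := Finset.sum_nonneg fun i _ => hA.1 i j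

lemma csum_nonneg {A : Matrix (Fin n) (Fin n) ℝ} (hA : IsValidMatrix A) (j : Fin n) :
    0 ≤ csum A j := Finset.sum_nonneg fun i _ => hA.1 i j

lemma csum_eq (b : ℕ) {A : Matrix (Fin n) (Fin n) ℝ} (hA : IsValidMatrix A) (j : Fin n) :
    csum A j = uu b A j + vv b A j := by
  have hsplit : ∑ i ∈ univ.filter (fun i => rIdx b i = rIdx b j), A i j
      + ∑ i ∈ univ.filter (fun i => ¬ rIdx b i = rIdx b j), A i j = csum A j :=
    Finset.sum_filter_add_sum_filter_not _ _ _
  have herase : univ.filter (fun i => rIdx b i = rIdx b j ∧ i ≠ j)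
      = (univ.filter (fun i => rIdx b i = rIdx b j)).erase j := by
    ext i
    simp only [Finset.mem_filter, Finset.mem_erase, Finset.mem_univ, true_and]
    tauto
  have hrow : ∑ i ∈ univ.filter (fun i => rIdx b i = rIdx b j), A i j = vv b A j := by
    have hjmem : j ∈ univ.filter (fun i => rIdx b i = rIdx b j) := by simp
    rw [← Finset.sum_erase_add _ _ hjmem, hA.2 j, add_zero, vv, herase]
  have huu : ∑ i ∈ univ.filter (fun i => ¬ rIdx b i = rIdx b j), A i j = uu b A j := rfl
  rw [← hsplit, hrow, huu]
  ring

noncomputable def amax {m : ℕ} (g : Fin (m + 1) → ℝ) : Fin (m + 1) :=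
  (univ.filter fun ℓ => ∀ ℓ', g ℓ' ≤ g ℓ).min' (by
    obtain ⟨ℓ, -, h⟩ := Finset.exists_max_image Finset.univ g ⟨0, Finset.mem_univ 0⟩
    exact ⟨ℓ, Finset.mem_filter.2 ⟨Finset.mem_univ _, fun ℓ' => h ℓ' (Finset.mem_univ _)⟩⟩)

lemma le_amax {m : ℕ} (g : Fin (m + 1) → ℝ) (ℓ : Fin (m + 1)) : g ℓ ≤ g (amax g) := by
  have h : amax g ∈ univ.filter fun ℓ => ∀ ℓ', g ℓ' ≤ g ℓ := Finset.min'_mem _ _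
  exact (Finset.mem_filter.1 h).2 ℓ

variable {m : ℕ}

noncomputable def ellA (b : ℕ) (A : Fin (m + 1) → Matrix (Fin n) (Fin n) ℝ) (i : Fin n) :
    Fin (m + 1) := amax fun ℓ => uu b (A ℓ) i

noncomputable def ellB (b : ℕ) (A : Fin (m + 1) → Matrix (Fin n) (Fin n) ℝ) (i : Fin n) :
    Fin (m + 1) := amax fun ℓ => vv b (A ℓ) i

noncomputable def us (b : ℕ) (A : Fin (m + 1) → Matrix (Fin n) (Fin n) ℝ) (i : Fin n) : ℝ :=
  uu b (A (ellA b A i)) i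

noncomputable def vs (b : ℕ) (A : Fin (m + 1) → Matrix (Fin n) (Fin n) ℝ) (i : Fin n) : ℝ :=
  vv b (A (ellB b A i)) i

def AselP (b : ℕ) (A : Fin (m + 1) → Matrix (Fin n) (Fin n) ℝ) (i : Fin n) : Prop :=
  ∀ j, rIdx b j = rIdx b i → ellA b A j = ellA b A i →
    us b A j < us b A i ∨ (us b A j = us b A i ∧ i ≤ j)

def BselP (b k2 : ℕ) (A : Fin (m + 1) → Matrix (Fin n) (Fin n) ℝ) (i : Fin n) : Prop :=
  ∀ j, dIdx b k2 j = dIdx b k2 i → ellB b A j = ellB b A i →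
    vs b A j < vs b A i ∨ (vs b A j = vs b A i ∧ i ≤ j)

noncomputable def mech (b k2 : ℕ) (A : Fin (m + 1) → Matrix (Fin n) (Fin n) ℝ)
    (ℓ : Fin (m + 1)) : Finset (Fin n) :=
  univ.filter fun i =>
    (AselP b A i ∧ ellA b A i = ℓ ∧ (vs b A i ≤ us b A i ∨ ¬ BselP b k2 A i)) ∨
    (BselP b k2 A i ∧ ellB b A i = ℓ ∧ (us b A i < vs b A i ∨ ¬ AselP b A i))

lemma Asel_unique {b : ℕ} {A : Fin (m + 1) → Matrix (Fin n) (Fin n) ℝ} {i i' : Fin n}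
    (h : AselP b A i) (h' : AselP b A i')
    (hr : rIdx b i = rIdx b i') (hl : ellA b A i = ellA b A i') : i = i' := by
  rcases h i' hr.symm hl.symm with h1 | ⟨h1, h2⟩ <;>
    rcases h' i hr hl with h3 | ⟨h3, h4⟩
  · exact absurd h3 (not_lt.2 h1.le)
  · exact absurd h1 (not_lt.2 h3.le)
  · exact absurd h3 (not_lt.2 h1.le)
  · exact le_antisymm h2 h4

lemma Bsel_unique {b k2 : ℕ} {A : Fin (m + 1) → Matrix (Fin n) (Fin n) ℝ} {i i' : Fin n}
    (h : BselP b k2 A i) (h' : BselP b k2 A i')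
    (hr : dIdx b k2 i = dIdx b k2 i') (hl : ellB b A i = ellB b A i') : i = i' := by
  rcases h i' hr.symm hl.symm with h1 | ⟨h1, h2⟩ <;>
    rcases h' i hr hl with h3 | ⟨h3, h4⟩
  · exact absurd h3 (not_lt.2 h1.le)
  · exact absurd h1 (not_lt.2 h3.le)
  · exact absurd h3 (not_lt.2 h1.le)
  · exact le_antisymm h2 h4


section winners

variable (b k2 : ℕ) (A : Fin (m + 1) → Matrix (Fin n) (Fin n) ℝ)

noncomputable def grpA (j : Fin n) : Finset (Fin n) :=
  univ.filter fun w => rIdx b w = rIdx b j ∧ ellA b A w = ellA b A j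

lemma mem_grpA_self (j : Fin n) : j ∈ grpA b A j := by simp [grpA]

noncomputable def wA (j : Fin n) : Fin n :=
  ((grpA b A j).filter fun w => ∀ w' ∈ grpA b A j, us b A w' ≤ us b A w).min' (by
    obtain ⟨w, hw, h⟩ := Finset.exists_max_image (grpA b A j) (us b A) ⟨j, mem_grpA_self b A j⟩
    exact ⟨w, Finset.mem_filter.2 ⟨hw, h⟩⟩)

lemma wA_spec (j : Fin n) :
    wA b A j ∈ grpA b A j ∧ ∀ w' ∈ grpA b A j, us b A w' ≤ us b A (wA b A j) :=
  Finset.mem_filter.1 (Finset.min'_mem _ _)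

lemma wA_Asel (j : Fin n) : AselP b A (wA b A j) := by
  obtain ⟨hmem, hmax⟩ := wA_spec b A j
  obtain ⟨-, hr, hl⟩ := Finset.mem_filter.1 hmem
  intro w' h1 h2
  have hw' : w' ∈ grpA b A j := by
    simp only [grpA, Finset.mem_filter, Finset.mem_univ, true_and]
    exact ⟨h1.trans hr, h2.trans hl⟩
  rcases lt_or_eq_of_le (hmax w' hw') with h | h
  · exact Or.inl h
  · refine Or.inr ⟨h, ?_⟩
    apply Finset.min'_le
    refine Finset.mem_filter.2 ⟨hw', fun w'' hw'' => ?_⟩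
    exact (hmax w'' hw'').trans h.ge

noncomputable def grpB (j : Fin n) : Finset (Fin n) :=
  univ.filter fun w => dIdx b k2 w = dIdx b k2 j ∧ ellB b A w = ellB b A j

lemma mem_grpB_self (j : Fin n) : j ∈ grpB b k2 A j := by simp [grpB]

noncomputable def wB (j : Fin n) : Fin n :=
  ((grpB b k2 A j).filter fun w => ∀ w' ∈ grpB b k2 A j, vs b A w' ≤ vs b A w).min' (by
    obtain ⟨w, hw, h⟩ := Finset.exists_max_image (grpB b k2 A j) (vs b A)
      ⟨j, mem_grpB_self b k2 A j⟩
    exact ⟨w, Finset.mem_filter.2 ⟨hw, h⟩⟩)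

lemma wB_spec (j : Fin n) :
    wB b k2 A j ∈ grpB b k2 A j ∧ ∀ w' ∈ grpB b k2 A j, vs b A w' ≤ vs b A (wB b k2 A j) :=
  Finset.mem_filter.1 (Finset.min'_mem _ _)

lemma wB_Bsel (j : Fin n) : BselP b k2 A (wB b k2 A j) := by
  obtain ⟨hmem, hmax⟩ := wB_spec b k2 A j
  obtain ⟨-, hr, hl⟩ := Finset.mem_filter.1 hmem
  intro w' h1 h2
  have hw' : w' ∈ grpB b k2 A j := by
    simp only [grpB, Finset.mem_filter, Finset.mem_univ, true_and]
    exact ⟨h1.trans hr, h2.trans hl⟩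
  rcases lt_or_eq_of_le (hmax w' hw') with h | h
  · exact Or.inl h
  · refine Or.inr ⟨h, ?_⟩
    apply Finset.min'_le
    refine Finset.mem_filter.2 ⟨hw', fun w'' hw'' => ?_⟩
    exact (hmax w'' hw'').trans h.ge

lemma sum_us_le (hb : 0 < b) (hA : ∀ ℓ, IsValidMatrix (A ℓ)) :
    ∑ j, us b A j ≤ (b : ℝ) * ∑ j ∈ univ.filter (AselP b A), us b A j := by
  have husnn : ∀ j, 0 ≤ us b A j := fun j => uu_nonneg b (hA _) j
  have step1 : ∑ j, us b A j ≤ ∑ j, us b A (wA b A j) :=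
    Finset.sum_le_sum fun j _ => (wA_spec b A j).2 j (mem_grpA_self b A j)
  have step2 : ∑ j : Fin n, us b A (wA b A j)
      = ∑ w : Fin n, ∑ j ∈ univ.filter (fun j => wA b A j = w), us b A (wA b A j) :=
    (Finset.sum_fiberwise_of_maps_to (fun j _ => Finset.mem_univ _) _).symm
  have step3 : ∀ w : Fin n, ∑ j ∈ univ.filter (fun j => wA b A j = w), us b A (wA b A j)
      ≤ (b : ℝ) * (if AselP b A w then us b A w else 0) := by
    intro w
    rcases (univ.filter (fun j => wA b A j = w)).eq_empty_or_nonempty with he | ⟨j0, hj0⟩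
    · rw [he, Finset.sum_empty]
      have h0 : (0:ℝ) ≤ if AselP b A w then us b A w else 0 := by
        split
        · exact husnn w
        · exact le_rfl
      exact mul_nonneg (Nat.cast_nonneg b) h0
    · have hw0 : wA b A j0 = w := (Finset.mem_filter.1 hj0).2
      have hAw : AselP b A w := hw0 ▸ wA_Asel b A j0
      rw [if_pos hAw]
      have hconst : ∑ j ∈ univ.filter (fun j => wA b A j = w), us b A (wA b A j)
          = ∑ j ∈ univ.filter (fun j => wA b A j = w), us b A w :=
        Finset.sum_congr rfl fun j hj => by rw [(Finset.mem_filter.1 hj).2]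
      have hrow : ∀ j ∈ univ.filter (fun j => wA b A j = w), rIdx b j = rIdx b w := by
        intro j hj
        have hmem := (wA_spec b A j).1
        have hr : rIdx b (wA b A j) = rIdx b j := (Finset.mem_filter.1 hmem).2.1
        rw [(Finset.mem_filter.1 hj).2] at hr
        exact hr.symm
      have hcard : (univ.filter (fun j => wA b A j = w)).card ≤ b := by
        have := Finset.card_le_card_of_injOn (fun j : Fin n => j.val % b)
          (fun j _ => Finset.mem_range.2 (Nat.mod_lt _ hb))
          (fun j hj j' hj' hmm => eq_of_div_mod
            ((hrow j hj).trans (hrow j' hj').symm) hmm)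
        simpa using this
      rw [hconst, Finset.sum_const, nsmul_eq_mul]
      have hc : ((univ.filter (fun j => wA b A j = w)).card : ℝ) ≤ (b : ℝ) := by
        exact_mod_cast hcard
      exact mul_le_mul_of_nonneg_right hc (husnn w)
  calc ∑ j, us b A j ≤ ∑ j, us b A (wA b A j) := step1
    _ = _ := step2
    _ ≤ ∑ w : Fin n, (b : ℝ) * (if AselP b A w then us b A w else 0) :=
        Finset.sum_le_sum fun w _ => step3 w
    _ = (b : ℝ) * ∑ w : Fin n, (if AselP b A w then us b A w else 0) :=
        (Finset.mul_sum _ _ _).symm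
    _ = (b : ℝ) * ∑ j ∈ univ.filter (AselP b A), us b A j := by
        rw [Finset.sum_filter]

end winners


section capture

variable (b k2 : ℕ) (A : Fin (m + 1) → Matrix (Fin n) (Fin n) ℝ)

lemma sum_vs_le (hb : 0 < b) (hn : n = k2 * b) (hA : ∀ ℓ, IsValidMatrix (A ℓ)) :
    ∑ j, vs b A j ≤ (b : ℝ) * ∑ j ∈ univ.filter (BselP b k2 A), vs b A j := by
  have hvsnn : ∀ j, 0 ≤ vs b A j := fun j => vv_nonneg b (hA _) j
  have step1 : ∑ j, vs b A j ≤ ∑ j, vs b A (wB b k2 A j) :=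
    Finset.sum_le_sum fun j _ => (wB_spec b k2 A j).2 j (mem_grpB_self b k2 A j)
  have step2 : ∑ j : Fin n, vs b A (wB b k2 A j)
      = ∑ w : Fin n, ∑ j ∈ univ.filter (fun j => wB b k2 A j = w), vs b A (wB b k2 A j) :=
    (Finset.sum_fiberwise_of_maps_to (fun j _ => Finset.mem_univ _) _).symm
  have step3 : ∀ w : Fin n, ∑ j ∈ univ.filter (fun j => wB b k2 A j = w), vs b A (wB b k2 A j)
      ≤ (b : ℝ) * (if BselP b k2 A w then vs b A w else 0) := by
    intro w
    rcases (univ.filter (fun j => wB b k2 A j = w)).eq_empty_or_nonempty with he | ⟨j0, hj0⟩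
    · rw [he, Finset.sum_empty]
      have h0 : (0:ℝ) ≤ if BselP b k2 A w then vs b A w else 0 := by
        split
        · exact hvsnn w
        · exact le_rfl
      exact mul_nonneg (Nat.cast_nonneg b) h0
    · have hw0 : wB b k2 A j0 = w := (Finset.mem_filter.1 hj0).2
      have hBw : BselP b k2 A w := hw0 ▸ wB_Bsel b k2 A j0
      rw [if_pos hBw]
      have hconst : ∑ j ∈ univ.filter (fun j => wB b k2 A j = w), vs b A (wB b k2 A j)
          = ∑ j ∈ univ.filter (fun j => wB b k2 A j = w), vs b A w :=
        Finset.sum_congr rfl fun j hj => by rw [(Finset.mem_filter.1 hj).2]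
      have hrow : ∀ j ∈ univ.filter (fun j => wB b k2 A j = w), dIdx b k2 j = dIdx b k2 w := by
        intro j hj
        have hmem := (wB_spec b k2 A j).1
        have hr : dIdx b k2 (wB b k2 A j) = dIdx b k2 j := (Finset.mem_filter.1 hmem).2.1
        rw [(Finset.mem_filter.1 hj).2] at hr
        exact hr.symm
      have hcard : (univ.filter (fun j => wB b k2 A j = w)).card ≤ b := by
        have := Finset.card_le_card_of_injOn (fun j : Fin n => j.val % b)
          (fun j _ => Finset.mem_range.2 (Nat.mod_lt _ hb))
          (fun j hj j' hj' hmm => eq_of_dIdx_mod hb hn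
            ((hrow j hj).trans (hrow j' hj').symm) hmm)
        simpa using this
      rw [hconst, Finset.sum_const, nsmul_eq_mul]
      have hc : ((univ.filter (fun j => wB b k2 A j = w)).card : ℝ) ≤ (b : ℝ) := by
        exact_mod_cast hcard
      exact mul_le_mul_of_nonneg_right hc (hvsnn w)
  calc ∑ j, vs b A j ≤ ∑ j, vs b A (wB b k2 A j) := step1
    _ = _ := step2
    _ ≤ ∑ w : Fin n, (b : ℝ) * (if BselP b k2 A w then vs b A w else 0) :=
        Finset.sum_le_sum fun w _ => step3 w
    _ = (b : ℝ) * ∑ w : Fin n, (if BselP b k2 A w then vs b A w else 0) :=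
        (Finset.mul_sum _ _ _).symm
    _ = (b : ℝ) * ∑ j ∈ univ.filter (BselP b k2 A), vs b A j := by
        rw [Finset.sum_filter]

lemma mech_card (hb : 0 < b) (hk2 : 0 < k2) (hn : n = k2 * b) (ℓ : Fin (m + 1)) :
    (mech b k2 A ℓ).card ≤ k2 + k2 := by
  have hsub : mech b k2 A ℓ ⊆ (univ.filter fun i => AselP b A i ∧ ellA b A i = ℓ)
      ∪ (univ.filter fun i => BselP b k2 A i ∧ ellB b A i = ℓ) := by
    intro i hi
    rcases (Finset.mem_filter.1 hi).2 with ⟨h1, h2, -⟩ | ⟨h1, h2, -⟩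
    · exact Finset.mem_union_left _ (Finset.mem_filter.2 ⟨Finset.mem_univ _, h1, h2⟩)
    · exact Finset.mem_union_right _ (Finset.mem_filter.2 ⟨Finset.mem_univ _, h1, h2⟩)
  have c1 : (univ.filter fun i => AselP b A i ∧ ellA b A i = ℓ).card ≤ k2 := by
    calc (univ.filter fun i => AselP b A i ∧ ellA b A i = ℓ).card
        ≤ (Finset.range k2).card := by
          apply Finset.card_le_card_of_injOn (fun i : Fin n => rIdx b i)
            (fun i _ => Finset.mem_range.2 (rIdx_lt hb hn i))
          intro i hi i' hi' hr
          simp only [Finset.mem_coe, Finset.mem_filter, Finset.mem_univ, true_and] at hi hi'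
          exact Asel_unique hi.1 hi'.1 hr (hi.2.trans hi'.2.symm)
      _ = k2 := Finset.card_range k2
  have c2 : (univ.filter fun i => BselP b k2 A i ∧ ellB b A i = ℓ).card ≤ k2 := by
    calc (univ.filter fun i => BselP b k2 A i ∧ ellB b A i = ℓ).card
        ≤ (Finset.range k2).card := by
          apply Finset.card_le_card_of_injOn (fun i : Fin n => dIdx b k2 i)
            (fun i _ => Finset.mem_range.2 (dIdx_lt hk2 i))
          intro i hi i' hi' hr
          simp only [Finset.mem_coe, Finset.mem_filter, Finset.mem_univ, true_and] at hi hi'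
          exact Bsel_unique hi.1 hi'.1 hr (hi.2.trans hi'.2.symm)
      _ = k2 := Finset.card_range k2
  calc (mech b k2 A ℓ).card ≤ _ := Finset.card_le_card hsub
    _ ≤ _ + _ := Finset.card_union_le _ _
    _ ≤ k2 + k2 := Nat.add_le_add c1 c2

lemma mech_disj (ℓ ℓ' : Fin (m + 1)) (hne : ℓ ≠ ℓ') :
    Disjoint (mech b k2 A ℓ) (mech b k2 A ℓ') := by
  rw [Finset.disjoint_left]
  intro i hi hi'
  rcases (Finset.mem_filter.1 hi).2 with ⟨h1, h2, h3⟩ | ⟨h1, h2, h3⟩ <;>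
    rcases (Finset.mem_filter.1 hi').2 with ⟨g1, g2, g3⟩ | ⟨g1, g2, g3⟩
  · exact hne (h2 ▸ g2 ▸ rfl)
  · rcases h3 with h3 | h3
    · rcases g3 with g3 | g3
      · exact absurd g3 (not_lt.2 h3)
      · exact g3 h1
    · exact h3 g1
  · rcases g3 with g3 | g3
    · rcases h3 with h3 | h3
      · exact absurd h3 (not_lt.2 g3)
      · exact h3 g1
    · exact g3 h1
  · exact hne (h2 ▸ g2 ▸ rfl)

end capture


section impartial

variable {b k2 : ℕ} {A A' : Fin (m + 1) → Matrix (Fin n) (Fin n) ℝ} {i0 : Fin n}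

lemma uu_inv (hR : ∀ ℓ i', i' ≠ i0 → A ℓ i' = A' ℓ i') {j : Fin n}
    (hj : rIdx b j = rIdx b i0) (ℓ : Fin (m + 1)) : uu b (A ℓ) j = uu b (A' ℓ) j := by
  apply Finset.sum_congr rfl
  intro i hi
  have hne : rIdx b i ≠ rIdx b j := (Finset.mem_filter.1 hi).2
  have : i ≠ i0 := fun h => hne (by rw [h, hj])
  rw [hR ℓ i this]

lemma ellA_inv (hR : ∀ ℓ i', i' ≠ i0 → A ℓ i' = A' ℓ i') {j : Fin n}
    (hj : rIdx b j = rIdx b i0) : ellA b A j = ellA b A' j := by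
  unfold ellA
  rw [show (fun ℓ => uu b (A ℓ) j) = fun ℓ => uu b (A' ℓ) j from
    funext fun ℓ => uu_inv hR hj ℓ]

lemma us_inv (hR : ∀ ℓ i', i' ≠ i0 → A ℓ i' = A' ℓ i') {j : Fin n}
    (hj : rIdx b j = rIdx b i0) : us b A j = us b A' j := by
  unfold us
  rw [← ellA_inv hR hj]
  exact uu_inv hR hj _

lemma AselP_of (hR : ∀ ℓ i', i' ≠ i0 → A ℓ i' = A' ℓ i') (h : AselP b A i0) :
    AselP b A' i0 := by
  intro j h1 h2
  have h2' : ellA b A j = ellA b A i0 := by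
    rw [ellA_inv hR h1, ellA_inv hR rfl]
    exact h2
  have := h j h1 h2'
  rwa [us_inv hR h1, us_inv hR rfl] at this

lemma vv_inv (hb : 0 < b) (hbk2 : b ≤ k2)
    (hR : ∀ ℓ i', i' ≠ i0 → A ℓ i' = A' ℓ i') {j : Fin n}
    (hj : dIdx b k2 j = dIdx b k2 i0) (ℓ : Fin (m + 1)) : vv b (A ℓ) j = vv b (A' ℓ) j := by
  apply Finset.sum_congr rfl
  intro i hi
  obtain ⟨hri, hij⟩ := (Finset.mem_filter.1 hi).2
  have : i ≠ i0 := by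
    intro h
    rw [h] at hri
    have hji : j = i0 := eq_of_rIdx_dIdx hb hbk2 hri.symm hj
    exact hij (by rw [h, hji])
  rw [hR ℓ i this]

lemma ellB_inv (hb : 0 < b) (hbk2 : b ≤ k2)
    (hR : ∀ ℓ i', i' ≠ i0 → A ℓ i' = A' ℓ i') {j : Fin n}
    (hj : dIdx b k2 j = dIdx b k2 i0) : ellB b A j = ellB b A' j := by
  unfold ellB
  rw [show (fun ℓ => vv b (A ℓ) j) = fun ℓ => vv b (A' ℓ) j from
    funext fun ℓ => vv_inv hb hbk2 hR hj ℓ]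

lemma vs_inv (hb : 0 < b) (hbk2 : b ≤ k2)
    (hR : ∀ ℓ i', i' ≠ i0 → A ℓ i' = A' ℓ i') {j : Fin n}
    (hj : dIdx b k2 j = dIdx b k2 i0) : vs b A j = vs b A' j := by
  unfold vs
  rw [← ellB_inv hb hbk2 hR hj]
  exact vv_inv hb hbk2 hR hj _

lemma BselP_of (hb : 0 < b) (hbk2 : b ≤ k2)
    (hR : ∀ ℓ i', i' ≠ i0 → A ℓ i' = A' ℓ i') (h : BselP b k2 A i0) :
    BselP b k2 A' i0 := by
  intro j h1 h2
  have h2' : ellB b A j = ellB b A i0 := by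
    rw [ellB_inv hb hbk2 hR h1, ellB_inv hb hbk2 hR rfl]
    exact h2
  have := h j h1 h2'
  rwa [vs_inv hb hbk2 hR h1, vs_inv hb hbk2 hR rfl] at this

lemma mech_inv (hb : 0 < b) (hbk2 : b ≤ k2)
    (hR : ∀ ℓ i', i' ≠ i0 → A ℓ i' = A' ℓ i') (ℓ : Fin (m + 1)) :
    (i0 ∈ mech b k2 A ℓ ↔ i0 ∈ mech b k2 A' ℓ) := by
  have hR' : ∀ ℓ i', i' ≠ i0 → A' ℓ i' = A ℓ i' := fun ℓ i' h => (hR ℓ i' h).symm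
  have hA : AselP b A i0 ↔ AselP b A' i0 := ⟨AselP_of hR, AselP_of hR'⟩
  have hB : BselP b k2 A i0 ↔ BselP b k2 A' i0 :=
    ⟨BselP_of hb hbk2 hR, BselP_of hb hbk2 hR'⟩
  have he1 : ellA b A i0 = ellA b A' i0 := ellA_inv hR rfl
  have he2 : ellB b A i0 = ellB b A' i0 := ellB_inv hb hbk2 hR rfl
  have hu : us b A i0 = us b A' i0 := us_inv hR rfl
  have hv : vs b A i0 = vs b A' i0 := vs_inv hb hbk2 hR rfl
  simp only [mech, Finset.mem_filter, Finset.mem_univ, true_and]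
  rw [hA, hB, he1, he2, hu, hv]

end impartial


section optimality

variable (b k2 : ℕ) (A : Fin (m + 1) → Matrix (Fin n) (Fin n) ℝ)

lemma score_eq (B : Matrix (Fin n) (Fin n) ℝ) (S : Finset (Fin n)) :
    score B S = ∑ j ∈ S, csum B j := Finset.sum_comm

lemma uu_le_us (ℓ : Fin (m + 1)) (j : Fin n) : uu b (A ℓ) j ≤ us b A j :=
  le_amax (fun ℓ => uu b (A ℓ) j) ℓ

lemma vv_le_vs (ℓ : Fin (m + 1)) (j : Fin n) : vv b (A ℓ) j ≤ vs b A j :=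
  le_amax (fun ℓ => vv b (A ℓ) j) ℓ

lemma opt_le (hA : ∀ ℓ, IsValidMatrix (A ℓ)) (k : ℕ) :
    optAssign (m + 1) k A ≤ ∑ j, (us b A j + vs b A j) := by
  apply csSup_le
  · refine ⟨0, ⟨fun _ => ∅, ⟨fun ℓ => by simp, fun ℓ ℓ' _ => by simp⟩, ?_⟩⟩
    simp [totalScore, score]
  · rintro x ⟨X, hX, rfl⟩
    have pd : ((Finset.univ : Finset (Fin (m + 1))) : Set (Fin (m + 1))).PairwiseDisjoint X :=
      fun ℓ _ ℓ' _ h => hX.2 ℓ ℓ' h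
    calc totalScore A X = ∑ ℓ, ∑ j ∈ X ℓ, csum (A ℓ) j :=
          Finset.sum_congr rfl fun ℓ _ => score_eq (A ℓ) (X ℓ)
      _ ≤ ∑ ℓ, ∑ j ∈ X ℓ, (us b A j + vs b A j) := by
          apply Finset.sum_le_sum
          intro ℓ _
          apply Finset.sum_le_sum
          intro j _
          rw [csum_eq b (hA ℓ) j]
          exact add_le_add (uu_le_us b A ℓ j) (vv_le_vs b A ℓ j)
      _ = ∑ j ∈ Finset.univ.biUnion X, (us b A j + vs b A j) :=
          (Finset.sum_biUnion pd).symm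
      _ ≤ ∑ j, (us b A j + vs b A j) := by
          apply Finset.sum_le_sum_of_subset_of_nonneg (Finset.subset_univ _)
          intro j _ _
          exact add_nonneg (uu_nonneg b (hA _) j) (vv_nonneg b (hA _) j)

lemma us_le_csum (hA : ∀ ℓ, IsValidMatrix (A ℓ)) (i : Fin n) :
    us b A i ≤ csum (A (ellA b A i)) i := by
  rw [csum_eq b (hA _) i]
  exact le_add_of_nonneg_right (vv_nonneg b (hA _) i)

lemma vs_le_csum (hA : ∀ ℓ, IsValidMatrix (A ℓ)) (i : Fin n) :
    vs b A i ≤ csum (A (ellB b A i)) i := by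
  rw [csum_eq b (hA _) i]
  exact le_add_of_nonneg_left (uu_nonneg b (hA _) i)

lemma mem_mech_A {i : Fin n} (h1 : AselP b A i)
    (h3 : vs b A i ≤ us b A i ∨ ¬ BselP b k2 A i) :
    i ∈ mech b k2 A (ellA b A i) :=
  Finset.mem_filter.2 ⟨Finset.mem_univ _, Or.inl ⟨h1, rfl, h3⟩⟩

lemma mem_mech_B {i : Fin n} (h1 : BselP b k2 A i)
    (h3 : us b A i < vs b A i ∨ ¬ AselP b A i) :
    i ∈ mech b k2 A (ellB b A i) :=
  Finset.mem_filter.2 ⟨Finset.mem_univ _, Or.inr ⟨h1, rfl, h3⟩⟩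

lemma tot_ge (hA : ∀ ℓ, IsValidMatrix (A ℓ)) :
    (∑ i ∈ univ.filter (AselP b A), us b A i)
      + (∑ i ∈ univ.filter (BselP b k2 A), vs b A i)
    ≤ 2 * totalScore A (mech b k2 A) := by
  have htot : totalScore A (mech b k2 A)
      = ∑ i : Fin n, ∑ ℓ, (if i ∈ mech b k2 A ℓ then csum (A ℓ) i else 0) := by
    rw [Finset.sum_comm]
    apply Finset.sum_congr rfl
    intro ℓ _
    rw [score_eq]
    rw [← Finset.sum_filter]
    apply Finset.sum_congr _ (fun j _ => rfl)
    ext j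
    simp
  have base : ∀ (i : Fin n) (ℓs : Fin (m + 1)), i ∈ mech b k2 A ℓs →
      csum (A ℓs) i ≤ ∑ ℓ, (if i ∈ mech b k2 A ℓ then csum (A ℓ) i else 0) := by
    intro i ℓs hmem
    have hnn : ∀ ℓ, ℓ ∈ (univ : Finset (Fin (m+1))) →
        (0:ℝ) ≤ if i ∈ mech b k2 A ℓ then csum (A ℓ) i else 0 := by
      intro ℓ _
      split
      · exact csum_nonneg (hA ℓ) i
      · exact le_rfl
    have := Finset.single_le_sum hnn (Finset.mem_univ ℓs)
    rwa [if_pos hmem] at this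
  have h1 : ∀ i : Fin n,
      (if AselP b A i then us b A i else if BselP b k2 A i then vs b A i else 0)
      ≤ ∑ ℓ, (if i ∈ mech b k2 A ℓ then csum (A ℓ) i else 0) := by
    intro i
    by_cases hAi : AselP b A i
    · rw [if_pos hAi]
      by_cases hc : vs b A i ≤ us b A i ∨ ¬ BselP b k2 A i
      · exact (us_le_csum b A hA i).trans (base i _ (mem_mech_A b k2 A hAi hc))
      · push_neg at hc
        calc us b A i ≤ vs b A i := hc.1.le
          _ ≤ csum (A (ellB b A i)) i := vs_le_csum b A hA i
          _ ≤ _ := base i _ (mem_mech_B b k2 A hc.2 (Or.inl hc.1))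
    · rw [if_neg hAi]
      by_cases hBi : BselP b k2 A i
      · rw [if_pos hBi]
        exact (vs_le_csum b A hA i).trans (base i _ (mem_mech_B b k2 A hBi (Or.inr hAi)))
      · rw [if_neg hBi]
        exact Finset.sum_nonneg fun ℓ _ => by
          split
          · exact csum_nonneg (hA ℓ) i
          · exact le_rfl
  have h2 : ∀ i : Fin n,
      (if BselP b k2 A i then vs b A i else if AselP b A i then us b A i else 0)
      ≤ ∑ ℓ, (if i ∈ mech b k2 A ℓ then csum (A ℓ) i else 0) := by
    intro i
    by_cases hBi : BselP b k2 A i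
    · rw [if_pos hBi]
      by_cases hc : us b A i < vs b A i ∨ ¬ AselP b A i
      · exact (vs_le_csum b A hA i).trans (base i _ (mem_mech_B b k2 A hBi hc))
      · push_neg at hc
        calc vs b A i ≤ us b A i := hc.1
          _ ≤ csum (A (ellA b A i)) i := us_le_csum b A hA i
          _ ≤ _ := base i _ (mem_mech_A b k2 A hc.2 (Or.inl hc.1))
    · rw [if_neg hBi]
      by_cases hAi : AselP b A i
      · rw [if_pos hAi]
        exact (us_le_csum b A hA i).trans (base i _ (mem_mech_A b k2 A hAi (Or.inr hBi)))
      · rw [if_neg hAi]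
        exact Finset.sum_nonneg fun ℓ _ => by
          split
          · exact csum_nonneg (hA ℓ) i
          · exact le_rfl
  have key : ∀ i : Fin n,
      (if AselP b A i then us b A i else 0) + (if BselP b k2 A i then vs b A i else 0)
      ≤ (if AselP b A i then us b A i else if BselP b k2 A i then vs b A i else 0)
        + (if BselP b k2 A i then vs b A i else if AselP b A i then us b A i else 0) := by
    intro i
    have hu : 0 ≤ us b A i := uu_nonneg b (hA _) i
    have hv : 0 ≤ vs b A i := vv_nonneg b (hA _) i
    by_cases hAi : AselP b A i <;> by_cases hBi : BselP b k2 A i <;>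
      simp [hAi, hBi] <;> linarith
  calc (∑ i ∈ univ.filter (AselP b A), us b A i)
        + (∑ i ∈ univ.filter (BselP b k2 A), vs b A i)
      = ∑ i : Fin n, ((if AselP b A i then us b A i else 0)
          + (if BselP b k2 A i then vs b A i else 0)) := by
        rw [Finset.sum_add_distrib, Finset.sum_filter, Finset.sum_filter]
    _ ≤ ∑ i : Fin n,
        ((if AselP b A i then us b A i else if BselP b k2 A i then vs b A i else 0)
        + (if BselP b k2 A i then vs b A i else if AselP b A i then us b A i else 0)) :=
        Finset.sum_le_sum fun i _ => key i
    _ = (∑ i : Fin n,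
          (if AselP b A i then us b A i else if BselP b k2 A i then vs b A i else 0))
        + ∑ i : Fin n,
          (if BselP b k2 A i then vs b A i else if AselP b A i then us b A i else 0) :=
        Finset.sum_add_distrib
    _ ≤ (∑ i : Fin n, ∑ ℓ, (if i ∈ mech b k2 A ℓ then csum (A ℓ) i else 0))
        + ∑ i : Fin n, ∑ ℓ, (if i ∈ mech b k2 A ℓ then csum (A ℓ) i else 0) :=
        add_le_add (Finset.sum_le_sum fun i _ => h1 i) (Finset.sum_le_sum fun i _ => h2 i)
    _ = 2 * totalScore A (mech b k2 A) := by rw [htot]; ring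

end optimality

end Stmt15Aux

/-- For `k < n`, `m·k ≤ n`, `b := 2n/k ∈ ℕ`, `k` even and `b ≤ k/2`, there exists
an impartial and `1/(2b)`-optimal `(n,m,k)`-assignment mechanism. -/
theorem stmt15 (n m k : ℕ) (hkn : k < n) (hmk : m * k ≤ n) (hdvd : k ∣ 2 * n)
    (hk2 : k % 2 = 0) (hble : 2 * n / k ≤ k / 2) :
    ∃ f : (Fin m → Matrix (Fin n) (Fin n) ℝ) → (Fin m → Finset (Fin n)),
      (∀ A, FeasibleAssignment m k (f A)) ∧ ImpartialAssign f ∧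
      AlphaOptimalAssign k f (1 / (2 * ((2 * n / k : ℕ) : ℝ))) := by
  rcases m with _ | m'
  · refine ⟨fun _ _ => ∅, ?_, ?_, ?_⟩
    · intro A
      exact ⟨fun ℓ => ℓ.elim0, fun ℓ => ℓ.elim0⟩
    · intro A A' _ _ i _ ℓ
      exact ℓ.elim0
    · intro A hA
      have hset : {x : ℝ | ∃ X : Fin 0 → Finset (Fin n),
          FeasibleAssignment 0 k X ∧ totalScore A X = x} = {0} := by
        ext x
        simp only [Set.mem_setOf_eq, Set.mem_singleton_iff]
        constructor
        · rintro ⟨X, -, rfl⟩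
          simp [totalScore]
        · rintro rfl
          exact ⟨fun _ => ∅, ⟨fun ℓ => ℓ.elim0, fun ℓ => ℓ.elim0⟩, by simp [totalScore]⟩
      have hopt0 : optAssign 0 k A = 0 := by
        unfold optAssign
        rw [hset]
        exact csSup_singleton 0
      rw [hopt0]
      simp [totalScore]
  · set k2 := k / 2 with hk2def
    set b := 2 * n / k with hbdef
    have hk0 : k ≠ 0 := by
      intro h
      rw [h] at hdvd
      have := Nat.eq_zero_of_zero_dvd hdvd
      omega
    have hkk2 : k = 2 * k2 := by omega
    have hk2pos : 0 < k2 := by omega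
    have hbk : b * k = 2 * n := Nat.div_mul_cancel hdvd
    have hbpos : 0 < b := by
      rcases Nat.eq_zero_or_pos b with h | h
      · rw [h, Nat.zero_mul] at hbk
        omega
      · exact h
    have hn : n = k2 * b := by
      have h2 : b * (2 * k2) = 2 * n := by rw [← hkk2]; exact hbk
      have h3 : 2 * (k2 * b) = 2 * n := by rw [← h2]; ring
      omega
    have hbk2 : b ≤ k2 := hble
    refine ⟨Stmt15Aux.mech b k2, ?_, ?_, ?_⟩
    · intro A
      refine ⟨fun ℓ => ?_, fun ℓ ℓ' h => Stmt15Aux.mech_disj b k2 A ℓ ℓ' h⟩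
      have := Stmt15Aux.mech_card b k2 A hbpos hk2pos hn ℓ
      omega
    · intro A A' _ _ i hR ℓ
      exact Stmt15Aux.mech_inv hbpos hbk2 hR ℓ
    · intro A hA
      have h1 := Stmt15Aux.opt_le b A hA k
      have h2 := Stmt15Aux.sum_us_le b A hbpos hA
      have h3 := Stmt15Aux.sum_vs_le b k2 A hbpos hn hA
      have h4 := Stmt15Aux.tot_ge b k2 A hA
      have hbR : (0:ℝ) < (b:ℝ) := by exact_mod_cast hbpos
      have hsum : ∑ j, (Stmt15Aux.us b A j + Stmt15Aux.vs b A j)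
          = (∑ j, Stmt15Aux.us b A j) + ∑ j, Stmt15Aux.vs b A j := Finset.sum_add_distrib
      rw [hsum] at h1
      have h5 := mul_le_mul_of_nonneg_left h4 hbR.le
      rw [mul_add] at h5
      have hopt : optAssign (m' + 1) k A
          ≤ 2 * (b:ℝ) * totalScore A (Stmt15Aux.mech b k2 A) := by
        nlinarith [h1, h2, h3, h5]
      calc 1 / (2 * (b:ℝ)) * optAssign (m' + 1) k A
          ≤ 1 / (2 * (b:ℝ)) * (2 * (b:ℝ) * totalScore A (Stmt15Aux.mech b k2 A)) := by
            apply mul_le_mul_of_nonneg_left hopt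
            positivity
        _ = totalScore A (Stmt15Aux.mech b k2 A) := by
            field_simp
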